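/- There is no quadratic polynomial h(s₁,s₂,y) = a₀ + a₁s₁ + a₂s₂ + a₃y + a₁₂s₁s₂ + a₁₃s₁y + a₂₃s₂y with real coefficients such that for all s₁, s₂, y ∈ {−1,1}: h(s₁,s₂,y) = 0 when y = s₁s₂, and h(s₁,s₂,y) > 0 when y ≠ s₁s₂. -/
import Mathlib

theorem stmt_2 :
    ¬ ∃ a₀ a₁ a₂ a₃ a₁₂ a₁₃ a₂₃ : ℝ, ∀ s₁ s₂ y : ℝ,
      s₁ ∈ ({-1, 1} : Set ℝ) → s₂ ∈ ({-1, 1} : Set ℝ) → y ∈ ({-1, 1} : Set ℝ) →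
      (y = s₁ * s₂ →
        a₀ + a₁ * s₁ + a₂ * s₂ + a₃ * y + a₁₂ * s₁ * s₂ + a₁₃ * s₁ * y + a₂₃ * s₂ * y = 0) ∧
      (y ≠ s₁ * s₂ →
        a₀ + a₁ * s₁ + a₂ * s₂ + a₃ * y + a₁₂ * s₁ * s₂ + a₁₃ * s₁ * y + a₂₃ * s₂ * y > 0) := by
  rintro ⟨a₀, a₁, a₂, a₃, a₁₂, a₁₃, a₂₃, h⟩
  have m1 : (-1 : ℝ) ∈ ({-1, 1} : Set ℝ) := Or.inl rfl
  have p1 : (1 : ℝ) ∈ ({-1, 1} : Set ℝ) := Or.inr rfl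
  have z1 := (h 1 1 1 p1 p1 p1).1 (by norm_num)
  have z2 := (h 1 (-1) (-1) p1 m1 m1).1 (by norm_num)
  have z3 := (h (-1) 1 (-1) m1 p1 m1).1 (by norm_num)
  have z4 := (h (-1) (-1) 1 m1 m1 p1).1 (by norm_num)
  have g1 := (h 1 1 (-1) p1 p1 m1).2 (by norm_num)
  have g2 := (h 1 (-1) 1 p1 m1 p1).2 (by norm_num)
  have g3 := (h (-1) 1 1 m1 p1 p1).2 (by norm_num)
  have g4 := (h (-1) (-1) (-1) m1 m1 m1).2 (by norm_num)
  linarith
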